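/- For n = 1 (so α = 1) and any D ≥ 0, the self-similar problem (ss-new) has the unique solution B = B_D := (15/2)(−D + √(4/5 + D²)) and H(x) = (B_D·D/2)(1 − x²) + (B_D²/24)(1 − x²)²; that is, this explicit pair solves the problem and any solution coincides with it. -/

import Mathlib

/-- First derivative within `[0,1)`. -/
noncomputable def dIco (f : ℝ → ℝ) : ℝ → ℝ := derivWithin f (Set.Ico 0 1)

/-- Third derivative within `[0,1)`. -/
noncomputable def d3Ico (f : ℝ → ℝ) : ℝ → ℝ := dIco (dIco (dIco f))

/-- `(B, H)` is a solution of the self-similar problem (ss-new) with mobility exponent `n`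
and contact-line friction coefficient `D` (here `α = 4/(n+3)`). -/
def IsSSNew (n D B : ℝ) (H : ℝ → ℝ) : Prop :=
  0 < B ∧
  ContinuousOn H (Set.Icc 0 1) ∧
  (∀ x ∈ Set.Ico (0:ℝ) 1, 0 < H x) ∧
  ContDiffOn ℝ 3 H (Set.Ico 0 1) ∧
  (∀ x ∈ Set.Ioo (0:ℝ) 1, H x ^ (n - 1) * d3Ico H x = B ^ 2 * x) ∧
  dIco H 0 = 0 ∧
  H 1 = 0 ∧
  Filter.Tendsto (fun x => (dIco H x) ^ 2) (nhdsWithin 1 (Set.Iio 1))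
    (nhds (D ^ 2 * B ^ (2 * (4 / (n + 3))))) ∧
  (∫ x in (0:ℝ)..1, H x) = 1

/-- The explicit constant `B_D = (15/2)(−D + √(4/5 + D²))` for `n = 1`. -/
noncomputable def BD (D : ℝ) : ℝ := 15 / 2 * (-D + Real.sqrt (4 / 5 + D ^ 2))

/-- The explicit self-similar profile for `n = 1`. -/
noncomputable def HD (D : ℝ) (x : ℝ) : ℝ :=
  BD D * D / 2 * (1 - x ^ 2) + (BD D) ^ 2 / 24 * (1 - x ^ 2) ^ 2

/-- For `n = 1` (so `α = 1`) and any `D ≥ 0`, the self-similar problem (ss-new) has the unique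
solution `(B_D, H_D)` given by the explicit formulas above. -/
lemma udo01 : UniqueDiffOn ℝ (Set.Ico (0:ℝ) 1) :=
  uniqueDiffOn_convex (convex_Ico 0 1) (by simp [interior_Ico])

lemma hasDerivAt_P (c0 c1 c2 c3 c4 c5 : ℝ) (t : ℝ) :
    HasDerivAt (fun t : ℝ => c0 + c1*t + c2*t^2 + c3*t^3 + c4*t^4 + c5*t^5)
      (c1 + 2*c2*t + 3*c3*t^2 + 4*c4*t^3 + 5*c5*t^4) t := by
  have h := (((((hasDerivAt_const t c0).add ((hasDerivAt_id t).const_mul c1)).add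
    ((hasDerivAt_pow 2 t).const_mul c2)).add ((hasDerivAt_pow 3 t).const_mul c3)).add
    ((hasDerivAt_pow 4 t).const_mul c4)).add ((hasDerivAt_pow 5 t).const_mul c5)
  refine h.congr_deriv ?_
  push_cast
  ring

lemma ftc_Ico (c0 c1 c2 c3 c4 : ℝ) {f : ℝ → ℝ}
    (hf : ContinuousOn f (Set.Ico 0 1))
    (hd : ∀ t ∈ Set.Ioo (0:ℝ) 1, HasDerivAt f (c0 + c1*t + c2*t^2 + c3*t^3 + c4*t^4) t)
    {x : ℝ} (hx : x ∈ Set.Ico (0:ℝ) 1) :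
    f x = f 0 + (c0*x + c1/2*x^2 + c2/3*x^3 + c3/4*x^4 + c4/5*x^5) := by
  have hgc : Continuous (fun t : ℝ => c0 + c1*t + c2*t^2 + c3*t^3 + c4*t^4) := by fun_prop
  have h1 := intervalIntegral.integral_eq_sub_of_hasDeriv_right_of_le hx.1
    (hf.mono (Set.Icc_subset_Ico_right hx.2))
    (fun t ht => (hd t ⟨ht.1, ht.2.trans hx.2⟩).hasDerivWithinAt)
    (hgc.intervalIntegrable 0 x)
  have h2 := intervalIntegral.integral_eq_sub_of_hasDerivAt
    (f := fun t : ℝ => c0*t + c1/2*t^2 + c2/3*t^3 + c3/4*t^4 + c4/5*t^5)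
    (f' := fun t : ℝ => c0 + c1*t + c2*t^2 + c3*t^3 + c4*t^4)
    (fun t _ => by
      have h := hasDerivAt_P 0 c0 (c1/2) (c2/3) (c3/4) (c4/5) t
      have e1 : (fun t : ℝ => c0*t + c1/2*t^2 + c2/3*t^3 + c3/4*t^4 + c4/5*t^5)
          = fun t : ℝ => 0 + c0*t + (c1/2)*t^2 + (c2/3)*t^3 + (c3/4)*t^4 + (c4/5)*t^5 := by
        funext s; ring
      rw [e1, show (c0 + c1*t + c2*t^2 + c3*t^3 + c4*t^4 : ℝ)
          = c0 + 2*(c1/2)*t + 3*(c2/3)*t^2 + 4*(c3/4)*t^3 + 5*(c4/5)*t^4 by ring]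
      exact h)
    (hgc.intervalIntegrable 0 x)
  rw [h2] at h1
  have h3 : (fun t : ℝ => c0*t + c1/2*t^2 + c2/3*t^3 + c3/4*t^4 + c4/5*t^5) x
      - (fun t : ℝ => c0*t + c1/2*t^2 + c2/3*t^3 + c3/4*t^4 + c4/5*t^5) 0
      = c0*x + c1/2*x^2 + c2/3*x^3 + c3/4*x^4 + c4/5*x^5 := by
    simp only []; ring
  rw [h3] at h1
  linarith

lemma BD_pos {D : ℝ} (hD : 0 ≤ D) : 0 < BD D := by
  have hs : Real.sqrt (4/5 + D^2) ^ 2 = 4/5 + D^2 := Real.sq_sqrt (by positivity)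
  have h1 : D < Real.sqrt (4/5 + D^2) := by
    nlinarith [Real.sqrt_nonneg (4/5 + D^2)]
  unfold BD; linarith

lemma BD_quad (D : ℝ) : (BD D)^2 + 15*D*(BD D) = 45 := by
  have hs : Real.sqrt (4/5 + D^2) ^ 2 = 4/5 + D^2 := Real.sq_sqrt (by positivity)
  unfold BD
  linear_combination (225/4) * hs

lemma uniq_part (D : ℝ) (hD : 0 ≤ D) (B : ℝ) (H : ℝ → ℝ) (hS : IsSSNew 1 D B H) :
    B = BD D ∧ ∀ x ∈ Set.Icc (0:ℝ) 1, H x = HD D x := by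
  obtain ⟨hB, hHc, hHpos, hHC3, hODE, hH'0, hH1, hTend, hInt⟩ := hS
  have hd3 : ∀ x ∈ Set.Ioo (0:ℝ) 1, d3Ico H x = B^2 * x := by
    intro x hx
    have h := hODE x hx
    rwa [show ((1:ℝ)-1) = 0 by norm_num, Real.rpow_zero, one_mul] at h
  have hC2 : ContDiffOn ℝ 2 (dIco H) (Set.Ico 0 1) := hHC3.derivWithin udo01 (by norm_num)
  have hC1 : ContDiffOn ℝ 1 (dIco (dIco H)) (Set.Ico 0 1) := hC2.derivWithin udo01 (by norm_num)
  have hmem : ∀ t ∈ Set.Ioo (0:ℝ) 1, Set.Ico (0:ℝ) 1 ∈ nhds t := fun t ht =>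
    Filter.mem_of_superset (isOpen_Ioo.mem_nhds ht) Set.Ioo_subset_Ico_self
  have hH' : ∀ t ∈ Set.Ioo (0:ℝ) 1, HasDerivAt H (dIco H t) t := fun t ht =>
    ((hHC3.differentiableOn (by norm_num) t (Set.Ioo_subset_Ico_self ht)).hasDerivWithinAt).hasDerivAt (hmem t ht)
  have hg' : ∀ t ∈ Set.Ioo (0:ℝ) 1, HasDerivAt (dIco H) (dIco (dIco H) t) t := fun t ht =>
    ((hC2.differentiableOn (by norm_num) t (Set.Ioo_subset_Ico_self ht)).hasDerivWithinAt).hasDerivAt (hmem t ht)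
  have hh' : ∀ t ∈ Set.Ioo (0:ℝ) 1, HasDerivAt (dIco (dIco H)) (d3Ico H t) t := fun t ht =>
    ((hC1.differentiableOn (by norm_num) t (Set.Ioo_subset_Ico_self ht)).hasDerivWithinAt).hasDerivAt (hmem t ht)
  have hHcont : ContinuousOn H (Set.Ico 0 1) := hHc.mono Set.Ico_subset_Icc_self
  have hgcont : ContinuousOn (dIco H) (Set.Ico 0 1) := hC2.continuousOn
  have hhcont : ContinuousOn (dIco (dIco H)) (Set.Ico 0 1) := hC1.continuousOn
  set h0 := dIco (dIco H) 0 with hh0def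
  -- level 1
  have hh_eq : ∀ x ∈ Set.Ico (0:ℝ) 1, dIco (dIco H) x = h0 + B^2/2*x^2 := by
    intro x hx
    have h := ftc_Ico 0 (B^2) 0 0 0 hhcont (fun t ht => by
      have h2 := hh' t ht
      rw [hd3 t ht] at h2
      rw [show (0 + B^2*t + 0*t^2 + 0*t^3 + 0*t^4 : ℝ) = B^2*t by ring]
      exact h2) hx
    rw [h]; ring
  -- level 2
  have hg_eq : ∀ x ∈ Set.Ico (0:ℝ) 1, dIco H x = h0*x + B^2/6*x^3 := by
    intro x hx
    have h := ftc_Ico h0 0 (B^2/2) 0 0 hgcont (fun t ht => by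
      have h2 := hg' t ht
      rw [hh_eq t (Set.Ioo_subset_Ico_self ht)] at h2
      rw [show (h0 + 0*t + B^2/2*t^2 + 0*t^3 + 0*t^4 : ℝ) = h0 + B^2/2*t^2 by ring]
      exact h2) hx
    rw [h, hH'0]; ring
  -- level 3
  have hH_eq : ∀ x ∈ Set.Ico (0:ℝ) 1, H x = H 0 + h0/2*x^2 + B^2/24*x^4 := by
    intro x hx
    have h := ftc_Ico 0 h0 0 (B^2/6) 0 hHcont (fun t ht => by
      have h2 := hH' t ht
      rw [hg_eq t (Set.Ioo_subset_Ico_self ht)] at h2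
      rw [show (0 + h0*t + 0*t^2 + B^2/6*t^3 + 0*t^4 : ℝ) = h0*t + B^2/6*t^3 by ring]
      exact h2) hx
    rw [h]; ring
  -- value at 1 by continuity
  have hne : (nhdsWithin (1:ℝ) (Set.Ico 0 1)).NeBot := by
    refine mem_closure_iff_nhdsWithin_neBot.mp ?_
    rw [closure_Ico (by norm_num : (0:ℝ) ≠ 1)]
    exact ⟨by norm_num, le_refl 1⟩
  have hlim1 : Filter.Tendsto H (nhdsWithin 1 (Set.Ico 0 1)) (nhds (H 1)) :=
    (hHc 1 ⟨by norm_num, le_refl 1⟩).mono_left (nhdsWithin_mono 1 Set.Ico_subset_Icc_self)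
  have hlim2 : Filter.Tendsto H (nhdsWithin 1 (Set.Ico 0 1)) (nhds (H 0 + h0/2 + B^2/24)) := by
    have hc : Continuous fun x : ℝ => H 0 + h0/2*x^2 + B^2/24*x^4 := by fun_prop
    have h2 := (hc.tendsto 1).mono_left (nhdsWithin_le_nhds (s := Set.Ico 0 1))
    have hev : (fun x : ℝ => H 0 + h0/2*x^2 + B^2/24*x^4) =ᶠ[nhdsWithin 1 (Set.Ico 0 1)] H := by
      filter_upwards [self_mem_nhdsWithin] with y hy
      exact (hH_eq y hy).symm
    have h3 : H 0 + h0/2*(1:ℝ)^2 + B^2/24*(1:ℝ)^4 = H 0 + h0/2 + B^2/24 := by norm_num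
    rw [h3] at h2
    exact h2.congr' hev
  have hH0 : H 0 = -(h0/2) - B^2/24 := by
    have := tendsto_nhds_unique hlim2 hlim1
    rw [hH1] at this
    linarith
  -- boundary derivative condition
  have hBpow : B ^ (2 * (4 / ((1:ℝ) + 3))) = B^2 := by
    rw [show (2 * (4 / ((1:ℝ) + 3))) = ((2:ℕ):ℝ) by norm_num, Real.rpow_natCast]
  rw [hBpow] at hTend
  have hlim3 : Filter.Tendsto (fun x => (dIco H x)^2) (nhdsWithin 1 (Set.Iio 1))
      (nhds ((h0 + B^2/6)^2)) := by
    have hc : Continuous fun x : ℝ => (h0*x + B^2/6*x^3)^2 := by fun_prop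
    have h2 := (hc.tendsto 1).mono_left (nhdsWithin_le_nhds (s := Set.Iio 1))
    have h3 : (h0*(1:ℝ) + B^2/6*(1:ℝ)^3)^2 = (h0 + B^2/6)^2 := by norm_num
    rw [h3] at h2
    refine h2.congr' ?_
    filter_upwards [Ioo_mem_nhdsLT_of_mem (show (1:ℝ) ∈ Set.Ioc 0 1 by norm_num)] with y hy
    rw [hg_eq y (Set.Ioo_subset_Ico_self hy)]
  have hkey2 : (h0 + B^2/6)^2 = D^2*B^2 := tendsto_nhds_unique hlim3 hTend
  -- sign
  have he_nonpos : h0 + B^2/6 ≤ 0 := by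
    by_contra hpos
    push_neg at hpos
    have hB2 : (0:ℝ) < B^2 := by positivity
    set m := min (1/2 : ℝ) (3*(h0 + B^2/6)/B^2) with hm
    have hm0 : 0 < m := lt_min (by norm_num) (by positivity)
    have hm2 : m ≤ 1/2 := min_le_left _ _
    have hm3 : m*B^2 ≤ 3*(h0 + B^2/6) := (le_div_iff₀ hB2).mp (min_le_right _ _)
    have hx : (1 - m) ∈ Set.Ico (0:ℝ) 1 := ⟨by linarith, by linarith⟩
    have hpos' := hHpos _ hx
    rw [hH_eq _ hx, hH0] at hpos'
    have h5 : 0 < m*(2-m) := by nlinarith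
    have heq : -(h0/2) - B^2/24 + h0/2*(1-m)^2 + B^2/24*(1-m)^4
        = (m*(2-m)) * (-(h0 + B^2/6)/2 + B^2*(m*(2-m))/24) := by ring
    rw [heq] at hpos'
    have h6 : 0 < -(h0 + B^2/6)/2 + B^2*(m*(2-m))/24 := by
      by_contra h6n
      push_neg at h6n
      nlinarith [mul_nonpos_of_nonneg_of_nonpos h5.le h6n]
    nlinarith [mul_le_mul_of_nonneg_right hm3 (by linarith : (0:ℝ) ≤ 2 - m),
      mul_nonneg hpos.le hm0.le]
  have he : h0 + B^2/6 = -(D*B) := by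
    have hfac : ((h0 + B^2/6) - D*B) * ((h0 + B^2/6) + D*B) = 0 := by linear_combination hkey2
    have hDB : 0 ≤ D*B := mul_nonneg hD hB.le
    rcases mul_eq_zero.mp hfac with h | h
    · linarith
    · linarith
  -- integral
  have hQeq : Set.EqOn H (fun x => 0 + h0*x + 0*x^2 + (B^2/6)*x^3 + 0*x^4) (Set.uIcc (0:ℝ) 1) →
      True := fun _ => trivial
  have hint2 : (∫ x in (0:ℝ)..1, H x) = H 0 + h0/6 + B^2/120 := by
    have hEq : Set.EqOn H (fun x => H 0 + (h0/2)*x^2 + (B^2/24)*x^4) (Set.uIcc (0:ℝ) 1) := by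
      intro x hx
      rw [Set.uIcc_of_le (by norm_num : (0:ℝ) ≤ 1)] at hx
      rcases eq_or_lt_of_le hx.2 with h1 | h1
      · simp only [h1, hH1]
        have : H 0 + h0/2*(1:ℝ)^2 + B^2/24*(1:ℝ)^4 = 0 := by rw [hH0]; ring
        linarith [this]
      · rw [hH_eq x ⟨hx.1, h1⟩]
    rw [intervalIntegral.integral_congr hEq]
    have hprim : ∀ t ∈ Set.uIcc (0:ℝ) 1,
        HasDerivAt (fun t : ℝ => 0 + (H 0)*t + 0*t^2 + (h0/6)*t^3 + 0*t^4 + (B^2/120)*t^5)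
          ((fun x : ℝ => H 0 + (h0/2)*x^2 + (B^2/24)*x^4) t) t := by
      intro t _
      have h := hasDerivAt_P 0 (H 0) 0 (h0/6) 0 (B^2/120) t
      simp only []
      rw [show (H 0 + (h0/2)*t^2 + (B^2/24)*t^4 : ℝ)
          = H 0 + 2*0*t + 3*(h0/6)*t^2 + 4*0*t^3 + 5*(B^2/120)*t^4 by ring]
      exact h
    rw [intervalIntegral.integral_eq_sub_of_hasDerivAt hprim
      ((by fun_prop : Continuous fun x : ℝ => H 0 + (h0/2)*x^2 + (B^2/24)*x^4).intervalIntegrable 0 1)]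
    ring
  rw [hInt] at hint2
  have hquad : B^2 + 15*D*B = 45 := by
    rw [hH0] at hint2
    nlinarith [hint2, he]
  have hb := BD_pos hD
  have hq := BD_quad D
  have hBeq : B = BD D := by
    have hfac2 : (B - BD D) * (B + BD D + 15*D) = 0 := by linear_combination hquad - hq
    rcases mul_eq_zero.mp hfac2 with h | h
    · linarith
    · linarith
  refine ⟨hBeq, ?_⟩
  intro x hx
  rcases eq_or_lt_of_le hx.2 with h1 | h1
  · rw [h1, hH1]
    show (0:ℝ) = BD D * D / 2 * (1 - (1:ℝ)^2) + (BD D)^2/24*(1-(1:ℝ)^2)^2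
    norm_num
  · rw [hH_eq x ⟨hx.1, h1⟩]
    show H 0 + h0/2*x^2 + B^2/24*x^4
      = BD D * D / 2 * (1 - x^2) + (BD D)^2/24*(1-x^2)^2
    rw [← hBeq]
    linear_combination hH0 + ((x^2-1)/2) * he

lemma hasDerivAt_of_polyeq (f g : ℝ → ℝ) (c0 c1 c2 c3 c4 c5 : ℝ)
    (hf : ∀ t, f t = c0 + c1*t + c2*t^2 + c3*t^3 + c4*t^4 + c5*t^5)
    (hg : ∀ t, g t = c1 + 2*c2*t + 3*c3*t^2 + 4*c4*t^3 + 5*c5*t^4) :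
    ∀ t, HasDerivAt f (g t) t := by
  intro t
  rw [show f = _ from funext hf, hg t]
  exact hasDerivAt_P c0 c1 c2 c3 c4 c5 t

lemma dIco_eq_of_hasDerivAt {f f' : ℝ → ℝ} (hf : ∀ x, HasDerivAt f (f' x) x)
    {x : ℝ} (hx : x ∈ Set.Ico (0:ℝ) 1) : dIco f x = f' x :=
  ((hf x).hasDerivWithinAt).derivWithin (udo01 x hx)

lemma dIco_congr {f g : ℝ → ℝ} (h : ∀ y ∈ Set.Ico (0:ℝ) 1, f y = g y)
    {x : ℝ} (hx : x ∈ Set.Ico (0:ℝ) 1) : dIco f x = dIco g x :=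
  derivWithin_congr h (h x hx)


lemma exists_part (D : ℝ) (hD : 0 ≤ D) : IsSSNew 1 D (BD D) (HD D) := by
  have hb : 0 < BD D := BD_pos hD
  have hq : (BD D)^2 + 15*D*(BD D) = 45 := BD_quad D
  set b := BD D with hbdef
  -- derivative chain
  have hg0 : ∀ t : ℝ, HasDerivAt (HD D) ((-(b*D) - b^2/6)*t + b^2/6*t^3) t := by
    refine hasDerivAt_of_polyeq _ _ (b*D/2 + b^2/24) 0 (-(b*D)/2 - b^2/12) 0 (b^2/24) 0 ?_ ?_
    · intro t; show b*D/2*(1-t^2) + b^2/24*(1-t^2)^2 = _; ring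
    · intro t; ring
  have hg1 : ∀ t : ℝ, HasDerivAt (fun t : ℝ => (-(b*D) - b^2/6)*t + b^2/6*t^3)
      ((-(b*D) - b^2/6) + b^2/2*t^2) t := by
    refine hasDerivAt_of_polyeq _ _ 0 (-(b*D) - b^2/6) 0 (b^2/6) 0 0 ?_ ?_
    · intro t; ring
    · intro t; ring
  have hg2 : ∀ t : ℝ, HasDerivAt (fun t : ℝ => (-(b*D) - b^2/6) + b^2/2*t^2)
      (b^2*t) t := by
    refine hasDerivAt_of_polyeq _ _ (-(b*D) - b^2/6) 0 (b^2/2) 0 0 0 ?_ ?_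
    · intro t; ring
    · intro t; ring
  have e1 : ∀ y ∈ Set.Ico (0:ℝ) 1, dIco (HD D) y = (-(b*D) - b^2/6)*y + b^2/6*y^3 :=
    fun y hy => dIco_eq_of_hasDerivAt hg0 hy
  have e2 : ∀ y ∈ Set.Ico (0:ℝ) 1, dIco (dIco (HD D)) y = (-(b*D) - b^2/6) + b^2/2*y^2 :=
    fun y hy => (dIco_congr e1 hy).trans (dIco_eq_of_hasDerivAt hg1 hy)
  have e3 : ∀ y ∈ Set.Ico (0:ℝ) 1, d3Ico (HD D) y = b^2*y :=
    fun y hy => (dIco_congr e2 hy).trans (dIco_eq_of_hasDerivAt hg2 hy)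
  refine ⟨hb, ?_, ?_, ?_, ?_, ?_, ?_, ?_, ?_⟩
  · exact (by unfold HD; fun_prop : Continuous (HD D)).continuousOn
  · intro x hx
    obtain ⟨hx0, hx1⟩ := hx
    have h1 : 0 < 1 - x^2 := by nlinarith
    show 0 < b*D/2*(1-x^2) + b^2/24*(1-x^2)^2
    nlinarith [mul_nonneg (mul_nonneg hb.le hD) h1.le, mul_pos (mul_pos hb hb) (mul_pos h1 h1)]
  · exact (by unfold HD; fun_prop : ContDiff ℝ 3 (HD D)).contDiffOn
  · intro x hx
    rw [e3 x (Set.Ioo_subset_Ico_self hx), show ((1:ℝ) - 1) = 0 by norm_num, Real.rpow_zero,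
      one_mul]
  · rw [e1 0 ⟨le_refl 0, by norm_num⟩]; ring
  · show b*D/2*(1-(1:ℝ)^2) + b^2/24*(1-(1:ℝ)^2)^2 = 0; norm_num
  · have hev : (fun x => (dIco (HD D) x)^2) =ᶠ[nhdsWithin 1 (Set.Iio 1)]
        (fun x => ((-(b*D) - b^2/6)*x + b^2/6*x^3)^2) := by
      filter_upwards [Ioo_mem_nhdsLT_of_mem (show (1:ℝ) ∈ Set.Ioc 0 1 by norm_num)] with y hy
      rw [e1 y (Set.Ioo_subset_Ico_self hy)]
    have hc : Continuous fun x : ℝ => ((-(b*D) - b^2/6)*x + b^2/6*x^3)^2 := by fun_prop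
    have h2 := (hc.tendsto 1).mono_left (nhdsWithin_le_nhds (s := Set.Iio 1))
    have h3 : D ^ 2 * b ^ (2 * (4 / ((1:ℝ) + 3))) =
        (fun x : ℝ => ((-(b*D) - b^2/6)*x + b^2/6*x^3)^2) 1 := by
      rw [show (2 * (4 / ((1:ℝ) + 3))) = ((2:ℕ):ℝ) by norm_num, Real.rpow_natCast]
      simp only []; ring
    rw [h3]
    exact h2.congr' hev.symm
  · have hprim : ∀ t ∈ Set.uIcc (0:ℝ) 1,
        HasDerivAt (fun t : ℝ => (b*D/2 + b^2/24)*t + (-(b*D)/2 - b^2/12)/3*t^3 + (b^2/24)/5*t^5)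
          (HD D t) t := by
      intro t _
      refine hasDerivAt_of_polyeq _ _ 0 (b*D/2 + b^2/24) 0 ((-(b*D)/2 - b^2/12)/3) 0 ((b^2/24)/5)
        ?_ ?_ t
      · intro s; ring
      · intro s; show b*D/2*(1-s^2) + b^2/24*(1-s^2)^2 = _; ring
    have hint := intervalIntegral.integral_eq_sub_of_hasDerivAt hprim
      ((by unfold HD; fun_prop : Continuous (HD D)).intervalIntegrable 0 1)
    rw [hint]
    ring_nf
    linarith [hq]

theorem ssnew_n1_explicit (D : ℝ) (hD : 0 ≤ D) :
    IsSSNew 1 D (BD D) (HD D) ∧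
    ∀ B H, IsSSNew 1 D B H → B = BD D ∧ ∀ x ∈ Set.Icc (0:ℝ) 1, H x = HD D x := by
  exact ⟨exists_part D hD, fun B H hS => uniq_part D hD B H hS⟩
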